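/- Suppose 0 < R < R_n. Then for each k ∈ {1,…,n}, the subspace {x = (C, J_1, …, J_n) ∈ M_n(R) : C = B_k} (configurations with the k-th arm folded) is homeomorphic to the disjoint union of 2^{n−1} circles; equivalently, it has exactly 2^{n−1} connected components and each component is homeomorphic to S¹. -/

import Mathlib

/-- Euclidean norm of a vector in ℝ². -/
noncomputable def enorm2 (v : ℝ × ℝ) : ℝ := Real.sqrt (v.1 ^ 2 + v.2 ^ 2)

/-- The k-th fixed endpoint `B_k = (R cos(2kπ/n), R sin(2kπ/n))` (indices from 0). -/
noncomputable def Bpt (n : ℕ) (R : ℝ) (k : Fin n) : ℝ × ℝ :=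
  (R * Real.cos (2 * (k.val : ℝ) * Real.pi / (n : ℝ)),
   R * Real.sin (2 * (k.val : ℝ) * Real.pi / (n : ℝ)))

/-- The configuration space `M_n(R)` of spiders with `n` arms of radius `R`,
as a subset of `(ℝ²)^{n+1} ≅ ℝ^{2n+2}`: a pair `(C, J)` with
`|C − J_k| = 1` and `|J_k − B_k| = 1` for all `k`. -/
noncomputable def MSpace (n : ℕ) (R : ℝ) : Set ((ℝ × ℝ) × (Fin n → ℝ × ℝ)) :=
  {x | ∀ k : Fin n, enorm2 (x.1 - x.2 k) = 1 ∧ enorm2 (x.2 k - Bpt n R k) = 1}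

/-- `d_n`, the maximum distance between `n`-th roots of unity. -/
noncomputable def dmax (n : ℕ) : ℝ :=
  if Even n then 2
  else Real.sqrt (2 - 2 * Real.cos (2 * ((n / 2 : ℕ) : ℝ) * Real.pi / (n : ℝ)))

/-- The critical radius `R_n = 2 / d_n`. -/
noncomputable def Rcrit (n : ℕ) : ℝ := 2 / dmax n

lemma enorm2_eq_one_iff (v : ℝ × ℝ) : enorm2 v = 1 ↔ v.1 ^ 2 + v.2 ^ 2 = 1 :=
  Real.sqrt_eq_one

lemma enorm2_nonneg (v : ℝ × ℝ) : 0 ≤ enorm2 v := Real.sqrt_nonneg _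

lemma enorm2_sq (v : ℝ × ℝ) : enorm2 v ^ 2 = v.1 ^ 2 + v.2 ^ 2 :=
  Real.sq_sqrt (by positivity)

/-- Algebraic core: intersection of two unit circles. -/
lemma circle_inter (u1 u2 q1 q2 d h : ℝ) (hd : 0 < d)
    (hu : u1 ^ 2 + u2 ^ 2 = d ^ 2) (hh : h ^ 2 = 1 - d ^ 2 / 4)
    (h1 : (u1 / 2 - q1) ^ 2 + (u2 / 2 - q2) ^ 2 = 1)
    (h2 : (q1 + u1 / 2) ^ 2 + (q2 + u2 / 2) ^ 2 = 1) :
    (q1 = h / d * u2 ∧ q2 = -(h / d * u1)) ∨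
    (q1 = -(h / d * u2) ∧ q2 = h / d * u1) := by
  have hdne : d ≠ 0 := ne_of_gt hd
  have dot : q1 * u1 + q2 * u2 = 0 := by linear_combination (h2 - h1) / 2
  have hq : q1 ^ 2 + q2 ^ 2 = h ^ 2 := by linear_combination (h1 + h2) / 2 - hu / 4 - hh
  have hw : (q1 * u2 - q2 * u1 - h * d) * (q1 * u2 - q2 * u1 + h * d) = 0 := by
    linear_combination (u1 ^ 2 + u2 ^ 2) * hq + h ^ 2 * hu - (q1 * u1 + q2 * u2) * dot
  rcases mul_eq_zero.mp hw with hw1 | hw1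
  · left
    have e1 : q1 * d * d = h * u2 * d := by linear_combination u2 * hw1 + u1 * dot - q1 * hu
    have e2 : q2 * d * d = -(h * u1) * d := by
      linear_combination -u1 * hw1 + u2 * dot - q2 * hu
    constructor
    · field_simp
      linear_combination mul_right_cancel₀ hdne e1
    · field_simp
      linear_combination mul_right_cancel₀ hdne e2
  · right
    have e1 : q1 * d * d = -(h * u2) * d := by
      linear_combination u2 * hw1 + u1 * dot - q1 * hu
    have e2 : q2 * d * d = h * u1 * d := by linear_combination -u1 * hw1 + u2 * dot - q2 * hu
    constructor
    · field_simp
      linear_combination mul_right_cancel₀ hdne e1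
    · field_simp
      linear_combination mul_right_cancel₀ hdne e2

/-- One of the two intersection points of unit circles centered at `A` and `B`. -/
noncomputable def ipt (A B : ℝ × ℝ) (b : Bool) : ℝ × ℝ :=
  ((A.1 + B.1) / 2 + (if b then (1:ℝ) else -1) *
      (Real.sqrt (1 - enorm2 (A - B) ^ 2 / 4) / enorm2 (A - B)) * (A.2 - B.2),
   (A.2 + B.2) / 2 - (if b then (1:ℝ) else -1) *
      (Real.sqrt (1 - enorm2 (A - B) ^ 2 / 4) / enorm2 (A - B)) * (A.1 - B.1))

lemma hsq_pos {A B : ℝ × ℝ} (hd0 : 0 < enorm2 (A - B)) (hd2 : enorm2 (A - B) < 2) :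
    0 < 1 - enorm2 (A - B) ^ 2 / 4 := by nlinarith [hd0, hd2]

lemma circle_inter_mem (u1 u2 d h ε : ℝ) (hdne : d ≠ 0)
    (hu : u1 ^ 2 + u2 ^ 2 = d ^ 2) (hh : h ^ 2 = 1 - d ^ 2 / 4) (he : ε ^ 2 = 1) :
    (u1 / 2 - ε * (h / d) * u2) ^ 2 + (u2 / 2 + ε * (h / d) * u1) ^ 2 = 1 := by
  have h2 : (h / d) ^ 2 * d ^ 2 = h ^ 2 := by field_simp
  linear_combination (1 / 4 + ε ^ 2 * (h / d) ^ 2) * hu + ε ^ 2 * h2 + h ^ 2 * he + hh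

lemma ipt_mem {A B : ℝ × ℝ} (hd0 : 0 < enorm2 (A - B)) (hd2 : enorm2 (A - B) < 2)
    (b : Bool) : enorm2 (A - ipt A B b) = 1 ∧ enorm2 (ipt A B b - B) = 1 := by
  have hdne : enorm2 (A - B) ≠ 0 := ne_of_gt hd0
  have hh : Real.sqrt (1 - enorm2 (A - B) ^ 2 / 4) ^ 2 = 1 - enorm2 (A - B) ^ 2 / 4 :=
    Real.sq_sqrt (le_of_lt (hsq_pos hd0 hd2))
  have hu : (A.1 - B.1) ^ 2 + (A.2 - B.2) ^ 2 = enorm2 (A - B) ^ 2 := (enorm2_sq (A - B)).symm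
  have he : ((if b then (1:ℝ) else -1)) ^ 2 = 1 := by cases b <;> norm_num
  have key1 := circle_inter_mem (A.1 - B.1) (A.2 - B.2) (enorm2 (A - B))
    (Real.sqrt (1 - enorm2 (A - B) ^ 2 / 4)) (if b then (1:ℝ) else -1) hdne hu hh he
  have key2 := circle_inter_mem (A.1 - B.1) (A.2 - B.2) (enorm2 (A - B))
    (Real.sqrt (1 - enorm2 (A - B) ^ 2 / 4)) (-(if b then (1:ℝ) else -1)) hdne hu hh
    (by rw [neg_pow]; simp [he])
  constructor
  · rw [enorm2_eq_one_iff]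
    simp only [ipt, Prod.fst_sub, Prod.snd_sub]
    linear_combination key1
  · rw [enorm2_eq_one_iff]
    simp only [ipt, Prod.fst_sub, Prod.snd_sub]
    linear_combination key2

lemma ipt_eq_of {A B : ℝ × ℝ} (hd0 : 0 < enorm2 (A - B)) (hd2 : enorm2 (A - B) < 2)
    (p : ℝ × ℝ) (h1 : enorm2 (A - p) = 1) (h2 : enorm2 (p - B) = 1) :
    p = ipt A B true ∨ p = ipt A B false := by
  have hh : Real.sqrt (1 - enorm2 (A - B) ^ 2 / 4) ^ 2 = 1 - enorm2 (A - B) ^ 2 / 4 :=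
    Real.sq_sqrt (le_of_lt (hsq_pos hd0 hd2))
  have hu : (A.1 - B.1) ^ 2 + (A.2 - B.2) ^ 2 = enorm2 (A - B) ^ 2 := (enorm2_sq (A - B)).symm
  rw [enorm2_eq_one_iff] at h1 h2
  have h1' : ((A.1 - B.1) / 2 - (p.1 - (A.1 + B.1) / 2)) ^ 2 +
      ((A.2 - B.2) / 2 - (p.2 - (A.2 + B.2) / 2)) ^ 2 = 1 := by
    have h1'' : (A.1 - p.1) ^ 2 + (A.2 - p.2) ^ 2 = 1 := h1
    linear_combination h1''
  have h2' : ((p.1 - (A.1 + B.1) / 2) + (A.1 - B.1) / 2) ^ 2 +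
      ((p.2 - (A.2 + B.2) / 2) + (A.2 - B.2) / 2) ^ 2 = 1 := by
    have h2'' : (p.1 - B.1) ^ 2 + (p.2 - B.2) ^ 2 = 1 := h2
    linear_combination h2''
  rcases circle_inter (A.1 - B.1) (A.2 - B.2) (p.1 - (A.1 + B.1) / 2)
      (p.2 - (A.2 + B.2) / 2) (enorm2 (A - B)) (Real.sqrt (1 - enorm2 (A - B) ^ 2 / 4))
      hd0 hu hh h1' h2' with ⟨e1, e2⟩ | ⟨e1, e2⟩
  · left
    apply Prod.ext <;> simp only [ipt, if_true] <;> simp <;> linarith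
  · right
    apply Prod.ext <;> simp only [ipt, if_false] <;> simp <;> linarith

lemma ipt_ne {A B : ℝ × ℝ} (hd0 : 0 < enorm2 (A - B)) (hd2 : enorm2 (A - B) < 2) :
    ipt A B true ≠ ipt A B false := by
  intro hcon
  have hdne : enorm2 (A - B) ≠ 0 := ne_of_gt hd0
  have hhpos : 0 < Real.sqrt (1 - enorm2 (A - B) ^ 2 / 4) :=
    Real.sqrt_pos.mpr (hsq_pos hd0 hd2)
  have hr : Real.sqrt (1 - enorm2 (A - B) ^ 2 / 4) / enorm2 (A - B) ≠ 0 :=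
    div_ne_zero (ne_of_gt hhpos) hdne
  have h1 := congrArg Prod.fst hcon
  have h2 := congrArg Prod.snd hcon
  simp only [ipt, if_true, if_false] at h1 h2
  norm_num at h1 h2
  have hu2 : Real.sqrt (1 - enorm2 (A - B) ^ 2 / 4) / enorm2 (A - B) * (A.2 - B.2) = 0 := by
    linarith
  have hu1 : Real.sqrt (1 - enorm2 (A - B) ^ 2 / 4) / enorm2 (A - B) * (A.1 - B.1) = 0 := by
    linarith
  have hu2' : A.2 - B.2 = 0 := by
    rcases mul_eq_zero.mp hu2 with h | h
    · exact absurd h hr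
    · exact h
  have hu1' : A.1 - B.1 = 0 := by
    rcases mul_eq_zero.mp hu1 with h | h
    · exact absurd h hr
    · exact h
  have hz : enorm2 (A - B) ^ 2 = 0 := by
    rw [enorm2_sq]
    have e1 : (A - B).1 = A.1 - B.1 := rfl
    have e2 : (A - B).2 = A.2 - B.2 := rfl
    rw [e1, e2, hu1', hu2']; ring
  exact hdne (pow_eq_zero_iff (by norm_num) |>.mp hz)

lemma ipt_inj {A B : ℝ × ℝ} (hd0 : 0 < enorm2 (A - B)) (hd2 : enorm2 (A - B) < 2)
    {b b' : Bool} (h : ipt A B b = ipt A B b') : b = b' := by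
  cases b <;> cases b' <;> first
    | rfl
    | exact absurd h.symm (ipt_ne hd0 hd2)
    | exact absurd h (ipt_ne hd0 hd2)


open Real in
lemma two_sub_two_cos_pos {θ : ℝ} (h0 : 0 < θ) (hπ : θ < Real.pi) :
    0 < 2 - 2 * Real.cos (2 * θ) := by
  have hc : Real.cos (2 * θ) = 1 - 2 * Real.sin θ ^ 2 := by
    rw [Real.cos_two_mul]
    nlinarith [Real.sin_sq_add_cos_sq θ]
  have hs := Real.sin_pos_of_pos_of_lt_pi h0 hπ
  nlinarith

lemma angle_lt_pi (n l : ℕ) (hn : 2 ≤ n) (h1 : 1 ≤ l) (h2 : 2 * l ≤ n) :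
    0 < (l : ℝ) * Real.pi / n ∧ 2 * (l : ℝ) * Real.pi / n ≤ Real.pi := by
  have hn0 : (0:ℝ) < n := by positivity
  have hl0 : (0:ℝ) < l := by exact_mod_cast h1
  have hpi := Real.pi_pos
  constructor
  · positivity
  · rw [div_le_iff₀ hn0]
    have : (2 * l : ℝ) ≤ n := by exact_mod_cast h2
    nlinarith

lemma cos_bound (n l : ℕ) (hn : 2 ≤ n) (h1 : 1 ≤ l) (h2 : l < n) :
    2 - 2 * Real.cos (2 * (l : ℝ) * Real.pi / n) ≤ dmax n ^ 2 ∧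
    0 < 2 - 2 * Real.cos (2 * (l : ℝ) * Real.pi / n) := by
  have hn0 : (0:ℝ) < n := by positivity
  have hpi := Real.pi_pos
  have hl0 : (0:ℝ) < l := by exact_mod_cast h1
  have hln : (l : ℝ) < n := by exact_mod_cast h2
  have hpos : 0 < 2 - 2 * Real.cos (2 * (l : ℝ) * Real.pi / n) := by
    have := two_sub_two_cos_pos (θ := (l : ℝ) * Real.pi / n)
      (by positivity)
      (by rw [div_lt_iff₀ hn0]; nlinarith)
    calc (0:ℝ) < 2 - 2 * Real.cos (2 * ((l : ℝ) * Real.pi / n)) := this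
      _ = 2 - 2 * Real.cos (2 * (l : ℝ) * Real.pi / n) := by ring_nf
  refine ⟨?_, hpos⟩
  by_cases he : Even n
  · rw [dmax, if_pos he]
    have := Real.neg_one_le_cos (2 * (l : ℝ) * Real.pi / n)
    nlinarith
  · rw [dmax, if_neg he]
    set m := n / 2 with hm
    have ho : n % 2 = 1 := Nat.odd_iff.mp (Nat.not_even_iff_odd.mp he)
    have hnm : n = 2 * m + 1 := by omega
    have hdm : Real.sqrt (2 - 2 * Real.cos (2 * (m : ℝ) * Real.pi / n)) ^ 2 =
        2 - 2 * Real.cos (2 * (m : ℝ) * Real.pi / n) := by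
      apply Real.sq_sqrt
      have := Real.cos_le_one (2 * (m : ℝ) * Real.pi / n)
      linarith
    rw [hdm]
    -- need cos (2lπ/n) ≥ cos (2mπ/n)
    have key : ∀ l' : ℕ, 1 ≤ l' → l' ≤ m →
        Real.cos (2 * (m : ℝ) * Real.pi / n) ≤ Real.cos (2 * (l' : ℝ) * Real.pi / n) := by
      intro l' hl'1 hl'm
      apply Real.cos_le_cos_of_nonneg_of_le_pi
      · positivity
      · exact (angle_lt_pi n m hn (by omega) (by omega)).2
      · have : (l' : ℝ) ≤ m := by exact_mod_cast hl'm
        have h2m : 2 * (l':ℝ) * Real.pi ≤ 2 * (m:ℝ) * Real.pi := by nlinarith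
        gcongr
    by_cases hlm : l ≤ m
    · have := key l h1 hlm
      linarith
    · -- use l' = n - l
      have hl' : 1 ≤ n - l ∧ n - l ≤ m := by omega
      have hcast : ((n - l : ℕ) : ℝ) = (n : ℝ) - l := by
        have : l ≤ n := le_of_lt h2
        exact Nat.cast_sub this
      have heq : 2 * (l : ℝ) * Real.pi / n = 2 * Real.pi - 2 * ((n - l : ℕ) : ℝ) * Real.pi / n := by
        rw [hcast]
        field_simp
        ring
      rw [heq, Real.cos_two_pi_sub]
      have := key (n - l) hl'.1 hl'.2
      linarith

lemma dmax_pos (n : ℕ) (hn : 2 ≤ n) : 0 < dmax n := by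
  by_cases he : Even n
  · rw [dmax, if_pos he]; norm_num
  · rw [dmax, if_neg he]
    apply Real.sqrt_pos.mpr
    have ho : n % 2 = 1 := Nat.odd_iff.mp (Nat.not_even_iff_odd.mp he)
    exact (cos_bound n (n / 2) hn (by omega) (by omega)).2

lemma Bpt_dist (n : ℕ) (hn : 2 ≤ n) (R : ℝ) (hR0 : 0 < R) (hRn : R < Rcrit n)
    (j k : Fin n) (hjk : j ≠ k) :
    0 < enorm2 (Bpt n R k - Bpt n R j) ∧ enorm2 (Bpt n R k - Bpt n R j) < 2 := by
  have hdm := dmax_pos n hn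
  have hRd : R * dmax n < 2 := by
    rw [Rcrit, lt_div_iff₀ hdm] at hRn
    linarith
  set a := 2 * (k.val : ℝ) * Real.pi / n with ha
  set b := 2 * (j.val : ℝ) * Real.pi / n with hb
  have hsq : enorm2 (Bpt n R k - Bpt n R j) ^ 2 = R ^ 2 * (2 - 2 * Real.cos (a - b)) := by
    rw [enorm2_sq]
    have e1 : (Bpt n R k - Bpt n R j).1 = R * Real.cos a - R * Real.cos b := rfl
    have e2 : (Bpt n R k - Bpt n R j).2 = R * Real.sin a - R * Real.sin b := rfl
    rw [e1, e2, Real.cos_sub]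
    nlinarith [Real.sin_sq_add_cos_sq a, Real.sin_sq_add_cos_sq b]
  -- reduce cos (a - b) to cos of positive angle
  have hn0 : (0:ℝ) < n := by positivity
  have hvne : j.val ≠ k.val := fun h => hjk (Fin.ext h)
  have hmain : ∃ l : ℕ, 1 ≤ l ∧ l < n ∧ Real.cos (a - b) = Real.cos (2 * (l:ℝ) * Real.pi / n) := by
    by_cases hjk' : j.val ≤ k.val
    · refine ⟨k.val - j.val, by omega, by omega, ?_⟩
      have hcast : ((k.val - j.val : ℕ) : ℝ) = (k.val : ℝ) - j.val := by
        exact Nat.cast_sub hjk'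
      rw [hcast, ha, hb]
      congr 1
      field_simp
    · refine ⟨j.val - k.val, by omega, by omega, ?_⟩
      have hcast : ((j.val - k.val : ℕ) : ℝ) = (j.val : ℝ) - k.val := by
        exact Nat.cast_sub (by omega)
      rw [← Real.cos_neg, hcast, ha, hb]
      congr 1
      field_simp
      ring
  obtain ⟨l, hl1, hl2, hleq⟩ := hmain
  obtain ⟨hub, hlb⟩ := cos_bound n l hn hl1 hl2
  rw [hleq] at hsq
  have hsqub : enorm2 (Bpt n R k - Bpt n R j) ^ 2 < 4 := by
    calc enorm2 (Bpt n R k - Bpt n R j) ^ 2 ≤ R ^ 2 * dmax n ^ 2 := by rw [hsq]; nlinarith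
      _ = (R * dmax n) ^ 2 := by ring
      _ < 4 := by nlinarith [mul_pos hR0 hdm]
  have hsqlb : 0 < enorm2 (Bpt n R k - Bpt n R j) ^ 2 := by rw [hsq]; positivity
  have hnn := enorm2_nonneg (Bpt n R k - Bpt n R j)
  constructor
  · nlinarith
  · nlinarith

/-- The folded-arm configuration determined by sign choices `c` and circle point `z`. -/
noncomputable def spiderMap (n : ℕ) (R : ℝ) (k : Fin n)
    (c : {j : Fin n // j ≠ k} → Bool) (z : ℝ × ℝ) : (ℝ × ℝ) × (Fin n → ℝ × ℝ) :=
  (Bpt n R k, fun j => if h : j = k then Bpt n R k + z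
    else ipt (Bpt n R k) (Bpt n R j) (c ⟨j, h⟩))

instance : CompactSpace {p : ℝ × ℝ // p.1 ^ 2 + p.2 ^ 2 = 1} := by
  have hc : IsCompact {p : ℝ × ℝ | p.1 ^ 2 + p.2 ^ 2 = 1} := by
    apply Metric.isCompact_of_isClosed_isBounded
    · exact isClosed_eq (by fun_prop) continuous_const
    · apply Bornology.IsBounded.subset
        (Metric.isBounded_closedBall (x := ((0, 0) : ℝ × ℝ)) (r := 1))
      rintro ⟨p1, p2⟩ hp
      simp only [Set.mem_setOf_eq] at hp
      simp only [Metric.mem_closedBall, Prod.dist_eq, Real.dist_eq, sub_zero]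
      apply max_le <;> rw [abs_le] <;> constructor <;> nlinarith [sq_nonneg p1, sq_nonneg p2]
  exact isCompact_iff_compactSpace.mp hc

lemma spiderMap_mem (n : ℕ) (hn : 2 ≤ n) (R : ℝ) (hR0 : 0 < R) (hRn : R < Rcrit n)
    (k : Fin n) (c : {j : Fin n // j ≠ k} → Bool) (z : ℝ × ℝ) (hz : z.1 ^ 2 + z.2 ^ 2 = 1) :
    spiderMap n R k c z ∈ MSpace n R ∧ (spiderMap n R k c z).1 = Bpt n R k := by
  refine ⟨fun j => ?_, rfl⟩
  by_cases hj : j = k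
  · subst hj
    simp only [spiderMap, dif_pos rfl]
    constructor
    · rw [enorm2_eq_one_iff]
      show ((Bpt n R j).1 - ((Bpt n R j).1 + z.1)) ^ 2 +
        ((Bpt n R j).2 - ((Bpt n R j).2 + z.2)) ^ 2 = 1
      linear_combination hz
    · rw [enorm2_eq_one_iff]
      show ((Bpt n R j).1 + z.1 - (Bpt n R j).1) ^ 2 +
        ((Bpt n R j).2 + z.2 - (Bpt n R j).2) ^ 2 = 1
      linear_combination hz
  · simp only [spiderMap, dif_neg hj]
    obtain ⟨hd0, hd2⟩ := Bpt_dist n hn R hR0 hRn j k hj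
    exact ipt_mem hd0 hd2 _



/-- Suppose `0 < R < R_n`. For each `k`, the subspace of `M_n(R)` of configurations
with the `k`-th arm folded (`C = B_k`) is homeomorphic to the disjoint union of
`2^{n−1}` circles, i.e. to `Fin (2^{n−1}) × S¹` where `S¹` is the unit circle in `ℝ²`. -/
theorem stmt17 (n : ℕ) (hn : 2 ≤ n) (R : ℝ) (hR0 : 0 < R) (hRn : R < Rcrit n)
    (k : Fin n) :
    Nonempty
      (({x : (ℝ × ℝ) × (Fin n → ℝ × ℝ) // x ∈ MSpace n R ∧ x.1 = Bpt n R k}) ≃ₜ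
        (Fin (2 ^ (n - 1)) × {p : ℝ × ℝ // p.1 ^ 2 + p.2 ^ 2 = 1})) := by
  classical
  have hcard : Fintype.card ({j : Fin n // j ≠ k} → Bool) = 2 ^ (n - 1) := by
    rw [Fintype.card_fun, Fintype.card_bool]
    congr 1
    rw [Fintype.card_subtype_compl, Fintype.card_subtype_eq, Fintype.card_fin]
  let σ : Fin (2 ^ (n - 1)) ≃ ({j : Fin n // j ≠ k} → Bool) :=
    (Fintype.equivFinOfCardEq hcard).symm
  let f : Fin (2 ^ (n - 1)) × {p : ℝ × ℝ // p.1 ^ 2 + p.2 ^ 2 = 1} →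
      {x : (ℝ × ℝ) × (Fin n → ℝ × ℝ) // x ∈ MSpace n R ∧ x.1 = Bpt n R k} :=
    fun sz => ⟨spiderMap n R k (σ sz.1) sz.2.val,
      spiderMap_mem n hn R hR0 hRn k (σ sz.1) sz.2.val sz.2.prop⟩
  have hinj : Function.Injective f := by
    rintro ⟨s, z⟩ ⟨s', z'⟩ h
    have h2 : (spiderMap n R k (σ s) z.val).2 = (spiderMap n R k (σ s') z'.val).2 :=
      congrArg (fun x => x.val.2) h
    have hz : z = z' := by
      have hk := congrFun h2 k
      simp only [spiderMap, dif_pos rfl] at hk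
      exact Subtype.ext (add_left_cancel hk)
    have hs : σ s = σ s' := by
      funext j
      obtain ⟨j, hj⟩ := j
      have hjj := congrFun h2 j
      simp only [spiderMap, dif_neg hj] at hjj
      obtain ⟨hd0, hd2⟩ := Bpt_dist n hn R hR0 hRn j k hj
      exact ipt_inj hd0 hd2 hjj
    exact Prod.ext (σ.injective hs) hz
  have hsurj : Function.Surjective f := by
    rintro ⟨x, hx, hC⟩
    set z := x.2 k - Bpt n R k with hzd
    have hz : z.1 ^ 2 + z.2 ^ 2 = 1 := (enorm2_eq_one_iff _).mp (hx k).2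
    set c : {j : Fin n // j ≠ k} → Bool :=
      fun j => if x.2 j.1 = ipt (Bpt n R k) (Bpt n R j.1) true then true else false with hcd
    refine ⟨(σ.symm c, ⟨z, hz⟩), ?_⟩
    apply Subtype.ext
    show spiderMap n R k (σ (σ.symm c)) z = x
    rw [Equiv.apply_symm_apply]
    have hfst : (spiderMap n R k c z).1 = x.1 := by rw [hC]; rfl
    apply Prod.ext hfst
    funext j
    by_cases hj : j = k
    · subst hj
      simp [spiderMap, hzd]
    · simp only [spiderMap, dif_neg hj]
      obtain ⟨hd0, hd2⟩ := Bpt_dist n hn R hR0 hRn j k hj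
      have h1 : enorm2 (Bpt n R k - x.2 j) = 1 := by rw [← hC]; exact (hx j).1
      by_cases hcond : x.2 j = ipt (Bpt n R k) (Bpt n R j) true
      · have hc : c ⟨j, hj⟩ = true := if_pos hcond
        rw [hc]
        exact hcond.symm
      · have hc : c ⟨j, hj⟩ = false := if_neg hcond
        rw [hc]
        rcases ipt_eq_of hd0 hd2 (x.2 j) h1 (hx j).2 with he | he
        · exact absurd he hcond
        · exact he.symm
  have hcont : Continuous f := by
    apply Continuous.subtype_mk
    show Continuous fun sz : Fin (2 ^ (n - 1)) × {p : ℝ × ℝ // p.1 ^ 2 + p.2 ^ 2 = 1} =>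
      ((Bpt n R k, fun j => if h : j = k then Bpt n R k + (sz.2.val : ℝ × ℝ)
        else ipt (Bpt n R k) (Bpt n R j) (σ sz.1 ⟨j, h⟩)) : (ℝ × ℝ) × (Fin n → ℝ × ℝ))
    apply Continuous.prodMk continuous_const
    apply continuous_pi
    intro j
    by_cases hj : j = k
    · simp only [dif_pos hj]
      exact continuous_const.add (continuous_subtype_val.comp continuous_snd)
    · simp only [dif_neg hj]
      exact (continuous_of_discreteTopology
        (f := fun s : Fin (2 ^ (n - 1)) => ipt (Bpt n R k) (Bpt n R j) (σ s ⟨j, hj⟩))).comp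
        continuous_fst
  let e := Equiv.ofBijective f ⟨hinj, hsurj⟩
  have hce : Continuous e := hcont
  exact ⟨hce.homeoOfEquivCompactToT2.symm⟩
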